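/- Let p_{1̄ 2̄}(n) = 1 − (2⟨K_n⟩/(n-1) − (1−μ)(K_n/(n-1))((K_n−1)/(n-2))) with ⟨K_n⟩ = μ + (1−μ)K_n, K_n = O(log n), K_n ≥ 2, μ ∈ (0,1) fixed, and let u ≥ 1 be a fixed integer. Then (p_{1̄ 2̄}(n))^{n−u} / e^{−2⟨K_n⟩} → 1 as n → ∞. -/

import Mathlib

open Filter Real

/-- `p_{1̄ 2̄}`: probability a third node selects neither of two fixed nodes, in the form
`1 - (2⟨Kn⟩/(n-1) - (1-μ)(Kn/(n-1))((Kn-1)/(n-2)))` with `⟨Kn⟩ = μ + (1-μ)Kn`. -/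
noncomputable def pnb1nb2 (μ : ℝ) (K : ℕ → ℕ) (n : ℕ) : ℝ :=
  1 - (2 * (μ + (1 - μ) * K n) / ((n : ℝ) - 1) -
    (1 - μ) * ((K n : ℝ) / ((n : ℝ) - 1)) * (((K n : ℝ) - 1) / ((n : ℝ) - 2)))

private lemma aux_div1 (k x M A : ℝ) (hx1 : 0 < x - 1) (hx0 : 0 < x)
    (hx2 : 0 < x - 2) (hkM : k ≤ M * A) (hMA : 0 ≤ M * A) :
    k / (x - 1) ≤ 2 * M * A / x := by
  rw [div_le_div_iff₀ hx1 hx0]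
  nlinarith [mul_le_mul_of_nonneg_right hkM hx0.le, mul_nonneg hMA hx2.le]

private lemma aux_div2 (k x M A : ℝ) (hx2 : 0 < x - 2) (hx0 : 0 < x)
    (hx4 : 0 ≤ x - 4) (hkM : k - 1 ≤ M * A) (hMA : 0 ≤ M * A) :
    (k - 1) / (x - 2) ≤ 2 * M * A / x := by
  rw [div_le_div_iff₀ hx2 hx0]
  nlinarith [mul_le_mul_of_nonneg_right hkM hx0.le, mul_nonneg hMA hx4]

private lemma aux_div3 (L x M A : ℝ) (hx1 : 0 < x - 1) (hx0 : 0 < x)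
    (hx2 : 0 < x - 2) (hLM : L ≤ M * A) (hMA : 0 ≤ M * A) :
    2 * L / (x - 1) ≤ 4 * M * A / x := by
  rw [div_le_div_iff₀ hx1 hx0]
  nlinarith [mul_le_mul_of_nonneg_right (show 2*L ≤ 2*(M*A) by linarith) hx0.le,
    mul_nonneg hMA hx2.le]

private lemma aux_kM (k C A : ℝ) (hK : k ≤ C * A) (hA1 : 1 ≤ A) : k ≤ (C + 1) * A := by
  nlinarith

private lemma aux_L1 (μ k : ℝ) (hμ1 : μ < 1) (hk2 : 2 ≤ k) : 1 < μ + (1 - μ) * k := by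
  nlinarith

private lemma aux_LM (μ k C A : ℝ) (hμ0 : 0 < μ) (hμ1 : μ < 1) (hk2 : 2 ≤ k)
    (hK : k ≤ C * A) (hA1 : 1 ≤ A) : μ + (1 - μ) * k ≤ (C + 1) * A := by
  nlinarith [mul_nonneg hμ0.le (by linarith : (0:ℝ) ≤ k)]

private lemma aux_b (μ t1 t2 s : ℝ) (hμ0 : 0 < μ) (hμ1 : μ < 1)
    (h1 : t1 ≤ s) (h2 : t2 ≤ s) (h10 : 0 ≤ t1) (h20 : 0 ≤ t2) (hs : 0 ≤ s) :
    (1 - μ) * t1 * t2 ≤ s * s := by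
  nlinarith [mul_le_mul h1 h2 h20 hs, mul_nonneg h10 h20]

private lemma aux_inv (a : ℝ) (ha0 : 0 < a) (hah : a ≤ 1/2) :
    (1 - a)⁻¹ ≤ 1 + a + 2 * a ^ 2 := by
  rw [inv_eq_one_div, div_le_iff₀ (by linarith : (0:ℝ) < 1 - a)]
  nlinarith [sq_nonneg a]

private lemma aux_up (a t b x L M A v : ℝ) (hv1 : 1 ≤ v) (hA1 : 1 ≤ A) (hx0 : 0 < x)
    (hM0 : 0 ≤ M) (hMA : 0 ≤ M * A) (hb0 : 0 ≤ b)
    (htx : t * x ≤ 4 * M * A) (ht0 : 0 ≤ t)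
    (hbx : b * x ^ 2 ≤ 4 * M ^ 2 * A ^ 2)
    (hcancel : -((x - v) * a) * x + 2 * L * x
      = t * x * (v - 1) + b * x ^ 2 - v * (b * x)) :
    ((x - v) * (-a) + 2 * L) * x ≤ (4 * M * v + 40 * M ^ 2) * A ^ 2 := by
  nlinarith [hcancel, hbx,
    mul_nonneg (sub_nonneg.2 htx) (by linarith : (0:ℝ) ≤ v - 1),
    mul_nonneg (mul_nonneg (by linarith : (0:ℝ) ≤ v) hb0) hx0.le,
    mul_nonneg (mul_nonneg (by linarith : (0:ℝ) ≤ 4*M) (by linarith : (0:ℝ) ≤ v))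
      (by nlinarith : (0:ℝ) ≤ A ^ 2 - A),
    sq_nonneg (M * A)]

private lemma aux_low (a t b x L M A v : ℝ) (hv1 : 1 ≤ v) (hA1 : 1 ≤ A) (hx0 : 0 < x)
    (hM0 : 0 ≤ M) (hMA : 0 ≤ M * A) (hb0 : 0 ≤ b) (ht0 : 0 ≤ t) (ha0 : 0 ≤ a)
    (hvx : v ≤ x) (hbx : b * x ^ 2 ≤ 4 * M ^ 2 * A ^ 2)
    (haxsq : (a * x) ^ 2 ≤ (4 * M * A) ^ 2)
    (hcancel : -((x - v) * a) * x + 2 * L * x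
      = t * x * (v - 1) + b * x ^ 2 - v * (b * x)) :
    -((4 * M * v + 40 * M ^ 2) * A ^ 2) ≤ ((x - v) * (-a - 2 * a ^ 2) + 2 * L) * x := by
  nlinarith [hcancel, hbx, haxsq,
    mul_nonneg (mul_nonneg ht0 hx0.le) (by linarith : (0:ℝ) ≤ v - 1),
    mul_nonneg hb0 (sq_nonneg x),
    mul_nonneg (mul_nonneg (sub_nonneg.2 hvx) hb0) hx0.le,
    mul_nonneg (mul_nonneg (by linarith : (0:ℝ) ≤ v) (sq_nonneg a)) hx0.le,
    mul_nonneg (mul_nonneg (by linarith : (0:ℝ) ≤ 4*M) (by linarith : (0:ℝ) ≤ v))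
      (sq_nonneg A),
    sq_nonneg (M * A)]

set_option maxHeartbeats 1600000 in
/-- If `Kn = O(log n)`, `Kn ≥ 2`, `μ ∈ (0,1)` fixed and `u ≥ 1` a fixed integer, then
`(p_{1̄ 2̄})^(n-u) / e^{-2⟨Kn⟩} → 1`, i.e. `(p_{1̄ 2̄})^(n-u) = e^{-2⟨Kn⟩}(1+o(1))`. -/
theorem pow_neither_asymp (μ : ℝ) (hμ0 : 0 < μ) (hμ1 : μ < 1)
    (K : ℕ → ℕ) (hK2 : ∀ n, 2 ≤ K n)
    (hKO : ∃ C : ℝ, 0 < C ∧ ∀ᶠ n : ℕ in atTop, (K n : ℝ) ≤ C * Real.log n)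
    (u : ℕ) (hu : 1 ≤ u) :
    Tendsto (fun n : ℕ =>
      (pnb1nb2 μ K n) ^ (n - u) / Real.exp (-2 * (μ + (1 - μ) * K n)))
      atTop (nhds 1) := by
  obtain ⟨C, hC0, hKC⟩ := hKO
  have hμ' : (0:ℝ) < 1 - μ := by linarith
  set M : ℝ := C + 1 with hMdef
  have hM1 : (1:ℝ) ≤ M := by rw [hMdef]; linarith
  have hM0 : (0:ℝ) < M := by linarith
  have hu1 : (1:ℝ) ≤ (u:ℝ) := by exact_mod_cast hu
  set D : ℝ := 4*M*(u:ℝ) + 40*M^2 with hDdef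
  set f : ℕ → ℝ := fun n =>
    ((n - u : ℕ):ℝ) * Real.log (pnb1nb2 μ K n) + 2*(μ + (1-μ)*(K n:ℝ)) with hfdef
  clear_value M D f
  -- bounding sequence tends to 0
  have hbound : Tendsto (fun n : ℕ => D * Real.log n ^ 2 / (n:ℝ)) atTop (nhds 0) := by
    have h1 : Tendsto (fun x : ℝ => Real.log x ^ 2 / (1*x+0)) atTop (nhds 0) :=
      Real.tendsto_pow_log_div_mul_add_atTop 1 0 2 one_ne_zero
    have h2 := (h1.const_mul D).comp tendsto_natCast_atTop_atTop
    simp only [one_mul, add_zero, mul_zero] at h2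
    simpa [Function.comp_def, mul_div_assoc] using h2
  -- eventual smallness of log
  have hlog_small : ∀ᶠ n : ℕ in atTop, Real.log n ≤ (n:ℝ)/(8*M) := by
    have hc : (0:ℝ) < 1/(8*M) := by positivity
    have h := Real.isLittleO_log_id_atTop.bound hc
    have h2 := tendsto_natCast_atTop_atTop.eventually h
    filter_upwards [h2, tendsto_natCast_atTop_atTop.eventually_ge_atTop (1:ℝ)]
      with n hn hn1
    have hb : |Real.log n| ≤ 1/(8*M) * |(n:ℝ)| := by
      simpa [Real.norm_eq_abs, id] using hn
    have h3 : Real.log n ≤ 1/(8*M)*(n:ℝ) := by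
      have := (le_abs_self (Real.log n)).trans hb
      rwa [abs_of_nonneg (by linarith : (0:ℝ) ≤ (n:ℝ))] at this
    calc Real.log n ≤ 1/(8*M)*(n:ℝ) := h3
      _ = (n:ℝ)/(8*M) := by ring
  have hlog_one : ∀ᶠ n : ℕ in atTop, (1:ℝ) ≤ Real.log n := by
    filter_upwards [eventually_ge_atTop 3] with n hn
    have h3 : (3:ℝ) ≤ (n:ℝ) := by exact_mod_cast hn
    have he : Real.exp 1 ≤ (n:ℝ) := le_trans (by nlinarith [Real.exp_one_lt_d9]) h3
    rwa [Real.le_log_iff_exp_le (by linarith)]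
  have hxlarge : ∀ᶠ n : ℕ in atTop, 2*(u:ℝ)+4 ≤ (n:ℝ) :=
    tendsto_natCast_atTop_atTop.eventually_ge_atTop _
  -- main eventual estimate
  have habs : ∀ᶠ n : ℕ in atTop,
      0 < pnb1nb2 μ K n ∧ |f n| ≤ D * Real.log n ^ 2 / (n:ℝ) := by
    filter_upwards [hKC, hlog_small, hlog_one, hxlarge] with n hK hsm hA1 hxn
    set x : ℝ := (n:ℝ) with hxdef
    set A : ℝ := Real.log n with hAdef
    set k : ℝ := (K n : ℝ) with hkdef
    clear_value x A k
    have hk2 : (2:ℝ) ≤ k := by rw [hkdef]; exact_mod_cast hK2 n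
    have hx6 : (6:ℝ) ≤ x := by linarith
    have hx1 : (0:ℝ) < x - 1 := by linarith
    have hx2 : (0:ℝ) < x - 2 := by linarith
    have hx0 : (0:ℝ) < x := by linarith
    have hA0 : (0:ℝ) < A := by linarith
    have hkM : k ≤ M * A := by rw [hMdef]; exact aux_kM k C A hK hA1
    set L : ℝ := μ + (1-μ)*k with hLdef
    clear_value L
    have hL1 : (1:ℝ) < L := by rw [hLdef]; exact aux_L1 μ k hμ1 hk2
    have hLM : L ≤ M * A := by
      rw [hLdef, hMdef]; exact aux_LM μ k C A hμ0 hμ1 hk2 hK hA1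
    have hA8 : 8*M*A ≤ x := by
      have := (le_div_iff₀ (by positivity : (0:ℝ) < 8*M)).mp hsm
      linarith
    set b : ℝ := (1-μ)*(k/(x-1))*((k-1)/(x-2)) with hbdef
    set a : ℝ := 2*L/(x-1) - b with hadef
    clear_value b a
    have hp : pnb1nb2 μ K n = 1 - a := by
      rw [pnb1nb2, ← hxdef, ← hkdef, ← hLdef, ← hbdef, ← hadef]
    have ht1_nonneg : (0:ℝ) ≤ k/(x-1) := div_nonneg (by linarith) hx1.le
    have ht2_nonneg : (0:ℝ) ≤ (k-1)/(x-2) := div_nonneg (by linarith) hx2.le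
    have hb_nonneg : 0 ≤ b := by
      rw [hbdef]
      exact mul_nonneg (mul_nonneg hμ'.le ht1_nonneg) ht2_nonneg
    have hMA : (0:ℝ) ≤ M * A := mul_nonneg hM0.le hA0.le
    have hdiv1 : k/(x-1) ≤ 2*M*A/x := aux_div1 k x M A hx1 hx0 hx2 hkM hMA
    have hdiv2 : (k-1)/(x-2) ≤ 2*M*A/x :=
      aux_div2 k x M A hx2 hx0 (by linarith) (by linarith) hMA
    have ht3_nonneg : (0:ℝ) ≤ 2*M*A/x := div_nonneg (by linarith) hx0.le
    have hb1 : b ≤ (2*M*A/x)*(2*M*A/x) := by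
      rw [hbdef]
      exact aux_b μ (k/(x-1)) ((k-1)/(x-2)) (2*M*A/x) hμ0 hμ1 hdiv1 hdiv2
        ht1_nonneg ht2_nonneg ht3_nonneg
    have hb_ub : b * x^2 ≤ 4*M^2*A^2 := by
      calc b*x^2 ≤ ((2*M*A/x)*(2*M*A/x))*x^2 :=
            mul_le_mul_of_nonneg_right hb1 (sq_nonneg x)
        _ = 4*M^2*A^2 := by field_simp [hx0.ne']; ring
    have hl_ub : 2*L/(x-1) ≤ 4*M*A/x := aux_div3 L x M A hx1 hx0 hx2 hLM hMA
    have ha_ub : a ≤ 4*M*A/x := by rw [hadef]; linarith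
    have hMAx : 4*M*A/x ≤ 1/2 := by
      rw [div_le_iff₀ hx0]; linarith
    have ha_half : a ≤ 1/2 := ha_ub.trans hMAx
    have hkx : k ≤ x - 1 := by linarith
    have ht2_le1 : (k-1)/(x-2) ≤ 1 := (div_le_one hx2).mpr (by linarith)
    have hb_le : b ≤ L/(x-1) := by
      have h1 : b ≤ (1-μ)*(k/(x-1)) := by
        rw [hbdef]
        nlinarith [mul_nonneg hμ'.le ht1_nonneg]
      have h2 : (1-μ)*(k/(x-1)) ≤ L/(x-1) := by
        rw [← mul_div_assoc]
        refine (div_le_div_iff_of_pos_right hx1).mpr ?_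
        rw [hLdef]; linarith
      linarith
    have ha_lb : L/(x-1) ≤ a := by
      rw [hadef]
      have hsplit : 2*L/(x-1) = L/(x-1) + L/(x-1) := by ring
      linarith
    have ha_pos : 0 < a :=
      lt_of_lt_of_le (div_pos (by linarith) hx1) ha_lb
    have hp1 : (0:ℝ) < 1 - a := by linarith
    refine ⟨by rw [hp]; exact hp1, ?_⟩
    -- log bounds
    have hlog_ub : Real.log (1-a) ≤ -a := by
      have := Real.log_le_sub_one_of_pos hp1; linarith
    have hlog_lb : -a - 2*a^2 ≤ Real.log (1-a) := by
      have h1 := Real.log_le_sub_one_of_pos (inv_pos.mpr hp1)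
      rw [Real.log_inv] at h1
      have h2 : (1-a)⁻¹ ≤ 1 + a + 2*a^2 := aux_inv a ha_pos ha_half
      linarith
    -- cast of exponent
    have hnu : u ≤ n := by
      have h : (u:ℝ) ≤ x := by linarith
      rw [hxdef] at h; exact_mod_cast h
    have hm : ((n - u : ℕ):ℝ) = x - u := by
      rw [Nat.cast_sub hnu, ← hxdef]
    have hxu : (0:ℝ) ≤ x - u := by linarith
    -- division cancellation helpers
    have hℓ_ub : 2*L/(x-1)*x ≤ 4*M*A := by
      have := mul_le_mul_of_nonneg_right hl_ub hx0.le
      rwa [div_mul_cancel₀ _ (ne_of_gt hx0)] at this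
    have hℓ_nonneg : (0:ℝ) ≤ 2*L/(x-1) := div_nonneg (by linarith) hx1.le
    have hax : a*x ≤ 4*M*A := by
      have := mul_le_mul_of_nonneg_right ha_ub hx0.le
      rwa [div_mul_cancel₀ _ (ne_of_gt hx0)] at this
    have haxsq : (a*x)^2 ≤ (4*M*A)^2 :=
      pow_le_pow_left₀ (mul_nonneg ha_pos.le hx0.le) hax 2
    -- the function value
    have hf : f n = (x - (u:ℝ)) * Real.log (1-a) + 2*L := by
      simp only [hfdef]; rw [hp, hm, ← hkdef, ← hLdef]
    have hcancel : -((x-(u:ℝ))*a)*x + 2*L*x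
        = (2*L/(x-1))*x*((u:ℝ)-1) + b*x^2 - (u:ℝ)*(b*x) := by
      rw [hadef]; field_simp; ring
    rw [hf, abs_le]
    constructor
    · -- lower bound
      have s2 : (x-(u:ℝ))*(-a-2*a^2) ≤ (x-(u:ℝ))*Real.log (1-a) :=
        mul_le_mul_of_nonneg_left hlog_lb hxu
      have htrans : ((x-(u:ℝ))*(-a-2*a^2) + 2*L)*x
          ≤ ((x-(u:ℝ))*Real.log (1-a) + 2*L)*x :=
        mul_le_mul_of_nonneg_right (by linarith) hx0.le
      have hlow : -(D*A^2) ≤ ((x-(u:ℝ))*(-a-2*a^2) + 2*L)*x := by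
        rw [hDdef]
        exact aux_low a (2*L/(x-1)) b x L M A (u:ℝ) hu1 hA1 hx0 hM0.le hMA
          hb_nonneg hℓ_nonneg ha_pos.le (by linarith) hb_ub haxsq hcancel
      rw [show -(D*A^2/x) = -(D*A^2)/x by ring, div_le_iff₀ hx0]
      linarith
    · -- upper bound
      have s1 : (x-(u:ℝ))*Real.log (1-a) ≤ (x-(u:ℝ))*(-a) :=
        mul_le_mul_of_nonneg_left hlog_ub hxu
      have htrans : ((x-(u:ℝ))*Real.log (1-a) + 2*L)*x ≤ ((x-(u:ℝ))*(-a) + 2*L)*x :=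
        mul_le_mul_of_nonneg_right (by linarith) hx0.le
      have hup : ((x-(u:ℝ))*(-a) + 2*L)*x ≤ D*A^2 := by
        rw [hDdef]
        exact aux_up a (2*L/(x-1)) b x L M A (u:ℝ) hu1 hA1 hx0 hM0.le hMA
          hb_nonneg hℓ_ub hℓ_nonneg hb_ub hcancel
      rw [le_div_iff₀ hx0]
      linarith
  -- conclude
  have key : Tendsto f atTop (nhds 0) := by
    have hup : ∀ᶠ n : ℕ in atTop, f n ≤ D * Real.log n ^ 2 / (n:ℝ) := by
      filter_upwards [habs] with n h; exact (abs_le.mp h.2).2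
    have hlo : ∀ᶠ n : ℕ in atTop, -(D * Real.log n ^ 2 / (n:ℝ)) ≤ f n := by
      filter_upwards [habs] with n h; exact (abs_le.mp h.2).1
    have hnegb : Tendsto (fun n : ℕ => -(D * Real.log n ^ 2 / (n:ℝ))) atTop (nhds 0) := by
      simpa using hbound.neg
    exact tendsto_of_tendsto_of_tendsto_of_le_of_le' hnegb hbound hlo hup
  have heq : (fun n => Real.exp (f n)) =ᶠ[atTop] (fun n : ℕ =>
      pnb1nb2 μ K n ^ (n - u) / Real.exp (-2 * (μ + (1 - μ) * K n))) := by
    filter_upwards [habs] with n h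
    have hp := h.1
    have h1 : pnb1nb2 μ K n ^ (n-u)
        = Real.exp (((n-u : ℕ):ℝ) * Real.log (pnb1nb2 μ K n)) := by
      rw [Real.exp_nat_mul, Real.exp_log hp]
    rw [h1, ← Real.exp_sub]
    simp only [hfdef]
    congr 1
    ring
  have hexp : Tendsto (fun n => Real.exp (f n)) atTop (nhds 1) := by
    have h := (Real.continuous_exp.tendsto 0).comp key
    simpa [Function.comp_def] using h
  exact hexp.congr' heq
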